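/- Let K be a field. The polynomial det((X_{mn})_{mn}) − det((Y_{mn})_{mn}) in the 8 variables X_{11}, X_{12}, X_{21}, X_{22}, Y_{11}, Y_{12}, Y_{21}, Y_{22} over K is irreducible. -/

import Mathlib

open MvPolynomial

namespace DetDiffAux

noncomputable section

abbrev σ₈ := Fin 2 × Fin 2 × Fin 2

def i₀ : σ₈ := (0, 0, 0)

abbrev S := {j : σ₈ // j ≠ i₀}

variable (K : Type*) [Field K]

abbrev R0 := MvPolynomial S K

/-- Move the variable `i₀` to the outside. -/
def φ : MvPolynomial σ₈ K ≃ₐ[K] Polynomial (R0 K) :=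
  (renameEquiv K (Equiv.optionSubtypeNe i₀).symm).trans (optionEquivLeft K S)

def v (j : σ₈) (h : j ≠ i₀ := by decide) : S := ⟨j, h⟩

def a : R0 K := X (v (0,1,1))

def c : R0 K :=
  -(X (v (0,0,1)) * X (v (0,1,0))) - X (v (1,0,0)) * X (v (1,1,1))
    + X (v (1,0,1)) * X (v (1,1,0))

/-- Evaluation point witnessing `X (v (0,1,1)) ∤ c`. -/
def f : S → K := fun j => if j.1 = (0,0,1) ∨ j.1 = (0,1,0) then 1 else 0

lemma eval_c : eval (f K) (c K) = -1 := by
  simp [c, f, v, eval_X]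

lemma not_X_dvd_c : ¬ a K ∣ c K := by
  rintro ⟨t, ht⟩
  have h0 : eval (f K) (c K) = 0 := by
    rw [ht, map_mul]
    have ha : eval (f K) (a K) = 0 := by
      simp only [a, f, v, eval_X]
      norm_num
    rw [ha, zero_mul]
  rw [eval_c] at h0
  exact one_ne_zero (neg_eq_zero.mp h0)

lemma prime_X_mv {σ : Type*} {R : Type*} [CommRing R] [IsDomain R] (n : σ) :
    Prime (X n : MvPolynomial σ R) := by
  classical
  let e := ((renameEquiv R (Equiv.optionSubtypeNe n).symm).trans
    (optionEquivLeft R {j : σ // j ≠ n})).toMulEquiv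
  rw [← MulEquiv.prime_iff e]
  have he : e (X n) = Polynomial.X := by
    show ((renameEquiv R (Equiv.optionSubtypeNe n).symm).trans
      (optionEquivLeft R {j : σ // j ≠ n})) (X n) = Polynomial.X
    rw [AlgEquiv.trans_apply, renameEquiv_apply, rename_X,
      Equiv.optionSubtypeNe_symm_self, optionEquivLeft_X_none]
  rw [he]
  exact Polynomial.prime_X

def q : Polynomial (R0 K) := Polynomial.C (a K) * Polynomial.X + Polynomial.C (c K)

lemma q_primitive : (q K).IsPrimitive := by
  rw [Polynomial.isPrimitive_iff_isUnit_of_C_dvd]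
  intro r hr
  have h1 : r ∣ a K := by
    have := (Polynomial.C_dvd_iff_dvd_coeff r (q K)).mp hr 1
    simpa [q] using this
  have h0 : r ∣ c K := by
    have := (Polynomial.C_dvd_iff_dvd_coeff r (q K)).mp hr 0
    simpa [q] using this
  obtain ⟨s, hs⟩ := h1
  rcases (prime_X_mv (R := K) (v (0,1,1))).irreducible.isUnit_or_isUnit hs with
    h | h
  · exact h
  · exfalso
    apply not_X_dvd_c K
    have hra : a K ∣ r := by
      have : Associated (r * s) r := associated_mul_unit_left r s h
      exact (hs ▸ this.dvd : a K ∣ r)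
    exact hra.trans h0

lemma a_ne_zero : a K ≠ 0 := MvPolynomial.X_ne_zero _

lemma q_irreducible : Irreducible (q K) := by
  classical
  letI : NormalizationMonoid (R0 K) := UniqueFactorizationMonoid.strongNormalizationMonoid.toNormalizationMonoid
  letI : NormalizedGCDMonoid (R0 K) := UniqueFactorizationMonoid.toNormalizedGCDMonoid _
  rw [(q_primitive K).irreducible_iff_irreducible_map_fraction_map
    (K := FractionRing (R0 K))]
  rw [q, Polynomial.map_add, Polynomial.map_mul, Polynomial.map_C, Polynomial.map_X,
    Polynomial.map_C]
  apply Polynomial.irreducible_of_degree_eq_one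
  apply Polynomial.degree_linear
  rw [Ne, map_eq_zero_iff _ (IsFractionRing.injective (R0 K) (FractionRing (R0 K)))]
  exact a_ne_zero K

lemma phi_det_diff :
    φ K ((Matrix.of fun m n => (X (0, m, n) : MvPolynomial σ₈ K)).det -
        (Matrix.of fun m n => (X (1, m, n) : MvPolynomial σ₈ K)).det) = q K := by
  have e0 : (Equiv.optionSubtypeNe i₀).symm ((0,0,0) : σ₈) = none :=
    Equiv.optionSubtypeNe_symm_self i₀
  have e1 : ∀ (j : σ₈) (h : j ≠ i₀),
      (Equiv.optionSubtypeNe i₀).symm j = some ⟨j, h⟩ :=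
    fun j h => Equiv.optionSubtypeNe_symm_of_ne h
  rw [Matrix.det_fin_two, Matrix.det_fin_two]
  simp only [Matrix.of_apply, φ, AlgEquiv.trans_apply, map_sub, map_mul, renameEquiv_apply,
    rename_X, e0, e1 _ (show ((0,1,1):σ₈) ≠ i₀ by decide),
    e1 _ (show ((0,0,1):σ₈) ≠ i₀ by decide), e1 _ (show ((0,1,0):σ₈) ≠ i₀ by decide),
    e1 _ (show ((1,0,0):σ₈) ≠ i₀ by decide), e1 _ (show ((1,1,1):σ₈) ≠ i₀ by decide),
    e1 _ (show ((1,0,1):σ₈) ≠ i₀ by decide), e1 _ (show ((1,1,0):σ₈) ≠ i₀ by decide),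
    optionEquivLeft_X_none, optionEquivLeft_X_some]
  rw [q, a, c]
  simp only [map_add, map_sub, map_mul, map_neg, v]
  ring

end

end DetDiffAux

/-- The polynomial `det((X_{mn})) − det((Y_{mn}))` in 8 variables is irreducible.
Variables are indexed by `Fin 2 × Fin 2 × Fin 2`, the first component distinguishing
the `X` and `Y` matrices. -/
theorem det_diff_irreducible (K : Type*) [Field K] :
    Irreducible
      ((Matrix.of fun m n => (X (0, m, n) : MvPolynomial (Fin 2 × Fin 2 × Fin 2) K)).det -
        (Matrix.of fun m n => (X (1, m, n) : MvPolynomial (Fin 2 × Fin 2 × Fin 2) K)).det) := by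
  rw [← MulEquiv.irreducible_iff (DetDiffAux.φ K)]
  rw [DetDiffAux.phi_det_diff K]
  exact DetDiffAux.q_irreducible K
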